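/- arXiv:2007.03057 — 2 statements merged into one kernel-verified Lean document; each statement's English description precedes it below -/
import Mathlib

section
/- Let w be a pseudometric and d,s_i,t_i,s_j,t_j points, with μ_{ij} = min{2w(s_i,s_j)+2w(s_j,t_i)+w(t_i,t_j), 2w(s_i,s_j)+2w(s_j,t_j)+w(t_j,t_i), 2w(s_i,t_i)+w(t_i,s_j)+w(s_j,t_j)}. Then (2w(d,s_i)+μ_{ij}+2w(d,s_j)+μ_{ji})/2 ≤ 2·min{2w(d,s_i)+μ_{ij}, 2w(d,s_j)+μ_{ji}}. -/
noncomputable def mu {α : Type*} [PseudoMetricSpace α] (si ti sj tj : α) : ℝ :=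
  min (min (2 * dist si sj + 2 * dist sj ti + dist ti tj)
      (2 * dist si sj + 2 * dist sj tj + dist tj ti))
    (2 * dist si ti + dist ti sj + dist sj tj)

private lemma mu_key {α : Type*} [PseudoMetricSpace α] (si ti sj tj : α) :
    mu si ti sj tj + 2 * dist si sj ≤ 3 * mu sj tj si ti := by
  unfold mu
  set X := 2 * dist si sj + 2 * dist sj ti + dist ti tj with hX
  set Y := 2 * dist si sj + 2 * dist sj tj + dist tj ti with hY
  set Z := 2 * dist si ti + dist ti sj + dist sj tj with hZ
  set P := 2 * dist sj si + 2 * dist si tj + dist tj ti with hPdef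
  set Q := 2 * dist sj si + 2 * dist si ti + dist ti tj with hQdef
  set R := 2 * dist sj tj + dist tj si + dist si ti with hRdef
  have hmY : min (min X Y) Z ≤ Y := le_trans (min_le_left _ _) (min_le_right _ _)
  have hmX : min (min X Y) Z ≤ X := le_trans (min_le_left _ _) (min_le_left _ _)
  have hmZ : min (min X Y) Z ≤ Z := min_le_right _ _
  have c1 : dist sj si = dist si sj := dist_comm _ _
  have c2 : dist tj si = dist si tj := dist_comm _ _
  have c3 : dist ti sj = dist sj ti := dist_comm _ _
  have c4 : dist tj ti = dist ti tj := dist_comm _ _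
  have t1 : dist sj tj ≤ dist sj si + dist si tj := dist_triangle _ _ _
  have t2 : dist sj ti ≤ dist sj si + dist si ti := dist_triangle _ _ _
  have t3 : dist si sj ≤ dist si tj + dist tj sj := dist_triangle _ _ _
  have c5 : dist tj sj = dist sj tj := dist_comm _ _
  have n1 : 0 ≤ dist si tj := dist_nonneg
  have n2 : 0 ≤ dist si ti := dist_nonneg
  have n3 : 0 ≤ dist ti tj := dist_nonneg
  have n4 : 0 ≤ dist si sj := dist_nonneg
  have n5 : 0 ≤ dist sj tj := dist_nonneg
  have hP : min (min X Y) Z + 2 * dist si sj ≤ 3 * P := by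
    have := hmY; rw [hY, hPdef] at *; linarith
  have hQ : min (min X Y) Z + 2 * dist si sj ≤ 3 * Q := by
    have := hmX; rw [hX, hQdef] at *; linarith
  have hR : min (min X Y) Z + 2 * dist si sj ≤ 3 * R := by
    have := hmZ; rw [hZ, hRdef] at *; linarith
  rcases le_total (min P Q) R with h | h
  · rw [min_eq_left h]
    rcases le_total P Q with h' | h'
    · rw [min_eq_left h']; exact hP
    · rw [min_eq_right h']; exact hQ
  · rw [min_eq_right h]; exact hR

theorem ma_two_approx_lat {α : Type*} [PseudoMetricSpace α]
    (d si ti sj tj : α) :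
    (2 * dist d si + mu si ti sj tj + (2 * dist d sj + mu sj tj si ti)) / 2
      ≤ 2 * min (2 * dist d si + mu si ti sj tj)
          (2 * dist d sj + mu sj tj si ti) := by
  have k1 := mu_key si ti sj tj
  have k2 := mu_key sj tj si ti
  have c : dist sj si = dist si sj := dist_comm _ _
  rw [c] at k2
  have t1 : dist d si ≤ dist d sj + dist sj si := dist_triangle _ _ _
  have t2 : dist d sj ≤ dist d si + dist si sj := dist_triangle _ _ _
  rw [c] at t1
  have n1 : 0 ≤ dist d si := dist_nonneg
  have n2 : 0 ≤ dist d sj := dist_nonneg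
  rcases le_total (2 * dist d si + mu si ti sj tj) (2 * dist d sj + mu sj tj si ti) with h | h
  · rw [min_eq_left h]; linarith
  · rw [min_eq_right h]; linarith
end

section
/- Let w be a pseudometric and d,s_i,t_i,s_j,t_j points, with u_{ij}, u_{ji}, μ_{ij}, μ_{ji} defined as in the car-sharing problem. Then u_{ij} + u_{ji} + 2·min{w(d,s_i), w(d,s_j)} + w(s_i,s_j) ≤ 3·min{2w(d,s_i)+μ_{ij}, 2w(d,s_j)+μ_{ji}}. -/
noncomputable def u {α : Type*} [PseudoMetricSpace α] (si ti sj tj : α) : ℝ :=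
  min (min (dist si sj + dist sj ti + dist ti tj) (dist si sj + dist sj tj + dist tj ti))
    (dist si ti + dist ti sj + dist sj tj)

private lemma key {α : Type*} [PseudoMetricSpace α] (si ti sj tj : α) :
    u si ti sj tj + u sj tj si ti + dist si sj ≤ 3 * mu si ti sj tj := by
  have t1 : dist si ti ≤ dist si sj + dist sj ti := dist_triangle si sj ti
  have t2 : dist si tj ≤ dist si sj + dist sj tj := dist_triangle si sj tj
  have t3 : dist si sj ≤ dist si ti + dist sj ti := by
    rw [← dist_comm ti sj]; exact dist_triangle si ti sj
  have h1 : (0:ℝ) ≤ dist si ti := dist_nonneg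
  have h2 : (0:ℝ) ≤ dist si sj := dist_nonneg
  have h3 : (0:ℝ) ≤ dist sj ti := dist_nonneg
  have h4 : (0:ℝ) ≤ dist ti tj := dist_nonneg
  have h5 : (0:ℝ) ≤ dist sj tj := dist_nonneg
  have h6 : (0:ℝ) ≤ dist si tj := dist_nonneg
  unfold u mu
  rw [dist_comm sj si, dist_comm tj ti, dist_comm ti sj, dist_comm tj si]
  set X1 := dist si sj + dist sj ti + dist ti tj with hX1
  set X2 := dist si sj + dist sj tj + dist ti tj with hX2
  set X3 := dist si ti + dist sj ti + dist sj tj with hX3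
  set Y1 := dist si sj + dist si tj + dist ti tj with hY1
  set Y2 := dist si sj + dist si ti + dist ti tj with hY2
  set Y3 := dist sj tj + dist si tj + dist si ti with hY3
  have a1 : min (min X1 X2) X3 ≤ X1 := le_trans (min_le_left _ _) (min_le_left _ _)
  have a2 : min (min X1 X2) X3 ≤ X2 := le_trans (min_le_left _ _) (min_le_right _ _)
  have a3 : min (min X1 X2) X3 ≤ X3 := min_le_right _ _
  have b1 : min (min Y1 Y2) Y3 ≤ Y1 := le_trans (min_le_left _ _) (min_le_left _ _)
  have b2 : min (min Y1 Y2) Y3 ≤ Y2 := le_trans (min_le_left _ _) (min_le_right _ _)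
  have b3 : min (min Y1 Y2) Y3 ≤ Y3 := min_le_right _ _
  rcases min_cases (min (2 * dist si sj + 2 * dist sj ti + dist ti tj)
      (2 * dist si sj + 2 * dist sj tj + dist ti tj))
      (2 * dist si ti + dist sj ti + dist sj tj) with ⟨hm, _⟩ | ⟨hm, _⟩
  · rw [hm]
    rcases min_cases (2 * dist si sj + 2 * dist sj ti + dist ti tj)
        (2 * dist si sj + 2 * dist sj tj + dist ti tj) with ⟨hn, _⟩ | ⟨hn, _⟩
    · rw [hn]; linarith [hX1, hY2]
    · rw [hn]; linarith [hX2, hY1]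
  · rw [hm]; linarith [hX3, hY3, hX1, hY1]

theorem ma_one_three_approx_lat {α : Type*} [PseudoMetricSpace α]
    (d si ti sj tj : α) :
    u si ti sj tj + u sj tj si ti + 2 * min (dist d si) (dist d sj) + dist si sj
      ≤ 3 * min (2 * dist d si + mu si ti sj tj)
          (2 * dist d sj + mu sj tj si ti) := by
  have k1 := key si ti sj tj
  have k2 := key sj tj si ti
  rw [dist_comm sj si] at k2
  have m1 : min (dist d si) (dist d sj) ≤ dist d si := min_le_left _ _
  have m2 : min (dist d si) (dist d sj) ≤ dist d sj := min_le_right _ _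
  have h1 : (0:ℝ) ≤ dist d si := dist_nonneg
  have h2 : (0:ℝ) ≤ dist d sj := dist_nonneg
  rw [mul_min_of_nonneg _ _ (by norm_num : (0:ℝ) ≤ 3)]
  apply le_min <;> linarith
end
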